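/- Let U ⊆ ℝ² be open and let ρ¹, ρ², u : U → ℝ be differentiable with ρ¹ > 0 and ρ¹ + ρ² > 0 on U. Suppose that on U the isothermal no-slip drift flux equations hold: ρ¹_t + u ρ¹_x + u_x ρ¹ = 0, ρ²_t + u ρ²_x + u_x ρ² = 0, and (ρ¹+ρ²)(u_t + u u_x) + (ρ¹_x + ρ²_x) = 0. Then the Riemann invariants r¹ := (u + ln(ρ¹+ρ²))/2, r² := (u − ln(ρ¹+ρ²))/2, r³ := ρ²/ρ¹ satisfy on U: r¹_t + (r¹+r²+1) r¹_x = 0, r²_t + (r¹+r²−1) r²_x = 0, and r³_t + (r¹+r²) r³_x = 0. -/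

import Mathlib

/- STATEMENT 0: passing from the isothermal no-slip drift flux model (a = 1)
to the Riemann invariants yields the diagonalized system (S). -/

noncomputable section

/-- Partial derivative with respect to the first ("time") variable. -/
def pt (f : ℝ × ℝ → ℝ) (p : ℝ × ℝ) : ℝ := fderiv ℝ f p (1, 0)

/-- Partial derivative with respect to the second ("space") variable. -/
def px (f : ℝ × ℝ → ℝ) (p : ℝ × ℝ) : ℝ := fderiv ℝ f p (0, 1)

theorem riemann_invariants_solve_diagonalized_system
    (U : Set (ℝ × ℝ)) (hU : IsOpen U)
    (ρ₁ ρ₂ u : ℝ × ℝ → ℝ)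
    (hρ₁ : ∀ p ∈ U, DifferentiableAt ℝ ρ₁ p)
    (hρ₂ : ∀ p ∈ U, DifferentiableAt ℝ ρ₂ p)
    (hu : ∀ p ∈ U, DifferentiableAt ℝ u p)
    (hpos₁ : ∀ p ∈ U, 0 < ρ₁ p)
    (hpos : ∀ p ∈ U, 0 < ρ₁ p + ρ₂ p)
    (heq₁ : ∀ p ∈ U, pt ρ₁ p + u p * px ρ₁ p + px u p * ρ₁ p = 0)
    (heq₂ : ∀ p ∈ U, pt ρ₂ p + u p * px ρ₂ p + px u p * ρ₂ p = 0)
    (heq₃ : ∀ p ∈ U,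
      (ρ₁ p + ρ₂ p) * (pt u p + u p * px u p) + (px ρ₁ p + px ρ₂ p) = 0) :
    let r₁ : ℝ × ℝ → ℝ := fun p => (u p + Real.log (ρ₁ p + ρ₂ p)) / 2
    let r₂ : ℝ × ℝ → ℝ := fun p => (u p - Real.log (ρ₁ p + ρ₂ p)) / 2
    let r₃ : ℝ × ℝ → ℝ := fun p => ρ₂ p / ρ₁ p
    ∀ p ∈ U,
      pt r₁ p + (r₁ p + r₂ p + 1) * px r₁ p = 0 ∧
      pt r₂ p + (r₁ p + r₂ p - 1) * px r₂ p = 0 ∧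
      pt r₃ p + (r₁ p + r₂ p) * px r₃ p = 0 := by
  intro r₁ r₂ r₃ p hp
  have h1 := (hρ₁ p hp).hasFDerivAt
  have h2 := (hρ₂ p hp).hasFDerivAt
  have h3 := (hu p hp).hasFDerivAt
  set A := fderiv ℝ ρ₁ p with hAdef
  set B := fderiv ℝ ρ₂ p with hBdef
  set C := fderiv ℝ u p with hCdef
  have hρ1ne : ρ₁ p ≠ 0 := ne_of_gt (hpos₁ p hp)
  have hρne : ρ₁ p + ρ₂ p ≠ 0 := ne_of_gt (hpos p hp)
  have hlog : HasFDerivAt (fun q => Real.log (ρ₁ q + ρ₂ q))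
      ((ρ₁ p + ρ₂ p)⁻¹ • (A + B)) p := (h1.add h2).log hρne
  have hr₁ : HasFDerivAt r₁ ((2:ℝ)⁻¹ • (C + (ρ₁ p + ρ₂ p)⁻¹ • (A + B))) p := by
    have := (h3.add hlog).const_smul ((2:ℝ)⁻¹)
    refine this.congr_of_eventuallyEq (Filter.Eventually.of_forall fun y => ?_)
    simp only [r₁, Pi.smul_apply, Pi.add_apply, smul_eq_mul]
    ring
  have hr₂ : HasFDerivAt r₂ ((2:ℝ)⁻¹ • (C - (ρ₁ p + ρ₂ p)⁻¹ • (A + B))) p := by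
    have := (h3.sub hlog).const_smul ((2:ℝ)⁻¹)
    refine this.congr_of_eventuallyEq (Filter.Eventually.of_forall fun y => ?_)
    simp only [r₂, Pi.smul_apply, Pi.sub_apply, smul_eq_mul]
    ring
  have hinv : HasFDerivAt (fun q => (ρ₁ q)⁻¹) ((-(ρ₁ p ^ 2)⁻¹) • A) p :=
    (hasDerivAt_inv hρ1ne).comp_hasFDerivAt p h1
  have hr₃ : HasFDerivAt r₃ ((ρ₂ p) • ((-(ρ₁ p ^ 2)⁻¹) • A) + (ρ₁ p)⁻¹ • B) p := by
    have := h2.mul hinv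
    refine this.congr_of_eventuallyEq (Filter.Eventually.of_forall fun y => ?_)
    simp only [r₃, Pi.mul_apply]
    ring
  -- scalar partials
  have e1 := heq₁ p hp
  have e2 := heq₂ p hp
  have e3 := heq₃ p hp
  simp only [pt, px, ← hAdef, ← hBdef, ← hCdef] at e1 e2 e3
  have hptr₁ : pt r₁ p = ((2:ℝ)⁻¹ • (C + (ρ₁ p + ρ₂ p)⁻¹ • (A + B))) (1,0) := by
    rw [pt, hr₁.fderiv]
  have hpxr₁ : px r₁ p = ((2:ℝ)⁻¹ • (C + (ρ₁ p + ρ₂ p)⁻¹ • (A + B))) (0,1) := by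
    rw [px, hr₁.fderiv]
  have hptr₂ : pt r₂ p = ((2:ℝ)⁻¹ • (C - (ρ₁ p + ρ₂ p)⁻¹ • (A + B))) (1,0) := by
    rw [pt, hr₂.fderiv]
  have hpxr₂ : px r₂ p = ((2:ℝ)⁻¹ • (C - (ρ₁ p + ρ₂ p)⁻¹ • (A + B))) (0,1) := by
    rw [px, hr₂.fderiv]
  have hptr₃ : pt r₃ p = ((ρ₂ p) • ((-(ρ₁ p ^ 2)⁻¹) • A) + (ρ₁ p)⁻¹ • B) (1,0) := by
    rw [pt, hr₃.fderiv]
  have hpxr₃ : px r₃ p = ((ρ₂ p) • ((-(ρ₁ p ^ 2)⁻¹) • A) + (ρ₁ p)⁻¹ • B) (0,1) := by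
    rw [px, hr₃.fderiv]
  have hsum : r₁ p + r₂ p = u p := by simp [r₁, r₂]; ring
  simp only [ContinuousLinearMap.add_apply, ContinuousLinearMap.smul_apply,
    ContinuousLinearMap.sub_apply, ContinuousLinearMap.coe_smul',
    Pi.smul_apply, smul_eq_mul] at hptr₁ hpxr₁ hptr₂ hpxr₂ hptr₃ hpxr₃
  rw [hsum] at *
  refine ⟨?_, ?_, ?_⟩
  · rw [hptr₁, hpxr₁]
    field_simp
    linear_combination e1 + e2 + e3
  · rw [hptr₂, hpxr₂]
    field_simp
    linear_combination e3 - e1 - e2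
  · rw [hptr₃, hpxr₃]
    field_simp
    linear_combination ρ₁ p * e2 - ρ₂ p * e1


end
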